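/- Let c > 0 and suppose ϑ is the pushforward of ν under the map x ↦ (x, cx), where ν is a Borel probability measure on [0,∞) with ν({0}) = 0 and ∫ x dν(x) = 1/α. Then for every z > c and every y ∈ ℝ: ϑ_e^z([0,∞) × [y,∞)) = z + (c − z) ν_e([y (c − z)⁻¹, ∞)) if y ≤ 0, and ϑ_e^z([0,∞) × [y,∞)) = c ν_e([y c⁻¹, ∞)) if y > 0. -/

import Mathlib

open MeasureTheory Set Filter Topology

noncomputable section

/-- The right half-plane `ℍ₊ = [0,∞) × ℝ`, as a subset of `ℝ × ℝ`. -/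
def Hplus : Set (ℝ × ℝ) := {p | 0 ≤ p.1}

/-- Translation of a set: `B + w = {b + w : b ∈ B}`. -/
def shiftSet (B : Set (ℝ × ℝ)) (w : ℝ × ℝ) : Set (ℝ × ℝ) := (fun b => b + w) '' B

/-- The excess lifetime distribution of `ν`: the measure on `ℝ` with Lebesgue density
`v ↦ α ν([v,∞))` on `[0,∞)` and `0` on `(-∞,0)`. -/
def excessLife (α : ℝ) (ν : Measure ℝ) : Measure ℝ :=
  volume.withDensity fun v => if 0 ≤ v then ENNReal.ofReal α * ν (Ici v) else 0

private lemma ofReal_max_zero (a : ℝ) : ENNReal.ofReal (max a 0) = ENNReal.ofReal a := by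
  rcases le_total a 0 with h | h
  · rw [max_eq_right h, ENNReal.ofReal_of_nonpos h, ENNReal.ofReal_zero]
  · rw [max_eq_left h]

private lemma layercake_key (ν : Measure ℝ) (f : ℝ → ℝ) (hf : Measurable f) :
    ∫⁻ u in Ioi (0:ℝ), ν {x | u ≤ f x} = ∫⁻ x, ENNReal.ofReal (f x) ∂ν := by
  have h := lintegral_eq_lintegral_meas_le ν (f := fun x => max (f x) 0)
    (Filter.Eventually.of_forall fun x => le_max_right _ _)
    (hf.max measurable_const).aemeasurable
  calc ∫⁻ u in Ioi (0:ℝ), ν {x | u ≤ f x}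
      = ∫⁻ u in Ioi (0:ℝ), ν {x | u ≤ max (f x) 0} := by
        refine setLIntegral_congr_fun measurableSet_Ioi
          (fun u hu => ?_)
        congr 1
        ext x
        simp only [mem_setOf_eq, le_max_iff]
        exact (or_iff_left (not_le.mpr hu)).symm
    _ = ∫⁻ x, ENNReal.ofReal (max (f x) 0) ∂ν := h.symm
    _ = ∫⁻ x, ENNReal.ofReal (f x) ∂ν := by simp_rw [ofReal_max_zero]

private lemma excess_apply (α : ℝ) (ν : Measure ℝ) {t : ℝ} (ht : 0 ≤ t) :
    excessLife α ν (Ici t) = ENNReal.ofReal α * ∫⁻ x, ENNReal.ofReal (x - t) ∂ν := by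
  have hmble : Measurable fun v : ℝ => ν (Ici v) :=
    Antitone.measurable fun a b hab => measure_mono (Ici_subset_Ici.mpr hab)
  rw [excessLife, withDensity_apply _ measurableSet_Ici]
  have h1 : ∫⁻ v in Ici t, (if 0 ≤ v then ENNReal.ofReal α * ν (Ici v) else 0) ∂volume
      = ∫⁻ v in Ici t, ENNReal.ofReal α * ν (Ici v) ∂volume :=
    setLIntegral_congr_fun measurableSet_Ici
      (fun v hv => if_pos (ht.trans hv))
  rw [h1, lintegral_const_mul _ hmble]
  congr 1
  have hemb : MeasurableEmbedding (fun u : ℝ => u + t) :=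
    (MeasurableEquiv.addRight t).measurableEmbedding
  have hmp : MeasurePreserving (fun u : ℝ => u + t) volume volume :=
    measurePreserving_add_right volume t
  have shift := hmp.setLIntegral_comp_preimage_emb hemb (fun v => ν (Ici v)) (Ici t)
  have hpre : (fun u : ℝ => u + t) ⁻¹' (Ici t) = Ici (0:ℝ) := by
    ext u; simp [le_add_iff_nonneg_left]
  rw [← shift, hpre]
  rw [← setLIntegral_congr (Ioi_ae_eq_Ici (a := (0:ℝ)))]
  have : ∀ u : ℝ, ν (Ici (u + t)) = ν {x | u ≤ x - t} := by
    intro u; congr 1; ext x; simp [mem_Ici, le_sub_iff_add_le, add_comm]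
  simp_rw [this]
  exact layercake_key ν (fun x => x - t) (measurable_id.sub_const t)

/-- linear deadlines `ϑ = ν ∘ (x ↦ (x,cx))⁻¹`, case `z > c`:
`ϑ_e^z([0,∞)×[y,∞)) = z + (c−z) ν_e([y/(c−z),∞))` for `y ≤ 0`, and
`= c ν_e([y/c,∞))` for `y > 0`. -/
theorem stmt_14 (α : ℝ) (hα : 0 < α) (c : ℝ) (hc : 0 < c)
    (ν : Measure ℝ) [IsProbabilityMeasure ν]
    (hνsupp : ν {x : ℝ | x < 0} = 0) (hνatom : ν ({0} : Set ℝ) = 0)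
    (hνmean : ∫⁻ x, ENNReal.ofReal x ∂ν = ENNReal.ofReal α⁻¹)
    (ϑ : Measure (ℝ × ℝ)) (hϑ : ϑ = ν.map (fun x : ℝ => (x, c * x)))
    (z : ℝ) (hcz : c < z) (τ : Measure (ℝ × ℝ)) [IsFiniteMeasure τ]
    (hτsupp : τ {p : ℝ × ℝ | p.1 < 0} = 0)
    (hτ : ∀ B : Set (ℝ × ℝ), MeasurableSet B → B ⊆ Hplus →
      τ B = ENNReal.ofReal α * ∫⁻ u in Ioi (0 : ℝ), ϑ (shiftSet B (u / z, u))) :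
    ∀ y : ℝ,
      (y ≤ 0 → (τ (Ici (0 : ℝ) ×ˢ Ici y)).toReal
          = z + (c - z) * (excessLife α ν (Ici (y / (c - z)))).toReal) ∧
      (0 < y → (τ (Ici (0 : ℝ) ×ˢ Ici y)).toReal
          = c * (excessLife α ν (Ici (y / c))).toReal) := by
  intro y
  have hz : (0:ℝ) < z := hc.trans hcz
  -- a.e. positivity of x under ν
  have hpos : ∀ᵐ x ∂ν, 0 < x := by
    have hle : ν {x : ℝ | ¬ 0 < x} = 0 := by
      have : {x : ℝ | ¬ 0 < x} ⊆ {x : ℝ | x < 0} ∪ {0} := by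
        intro x hx
        rcases lt_or_eq_of_le (not_lt.mp hx) with h | h
        · exact Or.inl h
        · exact Or.inr h
      exact le_antisymm (le_trans (measure_mono this)
        (le_trans (measure_union_le _ _) (by rw [hνsupp, hνatom, add_zero]))) zero_le
    exact hle
  -- finiteness of excessLife values
  have hEfin : ∀ t : ℝ, 0 ≤ t → excessLife α ν (Ici t) ≠ ⊤ := by
    intro t ht
    rw [excess_apply α ν ht]
    have hle : ∫⁻ x, ENNReal.ofReal (x - t) ∂ν ≤ ∫⁻ x, ENNReal.ofReal x ∂ν :=
      lintegral_mono fun x => ENNReal.ofReal_le_ofReal (by linarith)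
    rw [hνmean] at hle
    exact ENNReal.mul_ne_top ENNReal.ofReal_ne_top
      (lt_of_le_of_lt hle ENNReal.ofReal_lt_top).ne
  -- the main integral formula for τ
  set B : Set (ℝ × ℝ) := Ici (0:ℝ) ×ˢ Ici y with hB
  have hBm : MeasurableSet B := measurableSet_Ici.prod measurableSet_Ici
  have hBsub : B ⊆ Hplus := fun p hp => hp.1
  have hτB0 := hτ B hBm hBsub
  have hshift : ∀ u : ℝ, shiftSet B (u / z, u) = Ici (u/z) ×ˢ Ici (y + u) := by
    intro u
    ext p
    constructor
    · rintro ⟨b, ⟨hb1, hb2⟩, rfl⟩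
      exact ⟨by simpa using add_le_add_right hb1 (u/z), by simpa using add_le_add_right hb2 u⟩
    · rintro ⟨h1, h2⟩
      refine ⟨(p.1 - u/z, p.2 - u), ⟨by simp only [mem_Ici]; linarith [mem_Ici.mp h1],
        by simp only [mem_Ici]; linarith [mem_Ici.mp h2]⟩, ?_⟩
      simp [Prod.ext_iff]
  have hϑval : ∀ u : ℝ, ϑ (shiftSet B (u / z, u))
      = ν {x : ℝ | u ≤ min (z * x) (c * x - y)} := by
    intro u
    rw [hshift u, hϑ, Measure.map_apply (measurable_id.prod (measurable_const_mul c))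
      (measurableSet_Ici.prod measurableSet_Ici)]
    congr 1
    ext x
    simp only [mem_preimage, mem_prod, mem_Ici, mem_setOf_eq, le_min_iff]
    constructor
    · rintro ⟨h1, h2⟩
      exact ⟨by rw [div_le_iff₀ hz] at h1; linarith, by linarith⟩
    · rintro ⟨h1, h2⟩
      exact ⟨by rw [div_le_iff₀ hz]; linarith, by linarith⟩
  have hτB : τ B = ENNReal.ofReal α
      * ∫⁻ x, ENNReal.ofReal (min (z * x) (c * x - y)) ∂ν := by
    rw [hτB0]
    congr 1
    simp_rw [hϑval]
    exact layercake_key ν (fun x => min (z * x) (c * x - y))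
      ((measurable_const_mul z).min ((measurable_const_mul c).sub_const y))
  have hνtot : ENNReal.ofReal α * ∫⁻ x, ENNReal.ofReal x ∂ν = 1 := by
    rw [hνmean, ← ENNReal.ofReal_mul hα.le, mul_inv_cancel₀ hα.ne', ENNReal.ofReal_one]
  constructor
  · -- case y ≤ 0
    intro hy
    set t₀ : ℝ := y / (c - z) with ht₀def
    have hczneg : c - z < 0 := by linarith
    have ht₀ : 0 ≤ t₀ := div_nonneg_of_nonpos hy hczneg.le
    have ht₀y : (c - z) * t₀ = y := by
      rw [ht₀def, mul_div_cancel₀ _ hczneg.ne]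
    -- key ENNReal identity
    have hkey : τ B + ENNReal.ofReal (z - c) * excessLife α ν (Ici t₀)
        = ENNReal.ofReal z := by
      rw [hτB, excess_apply α ν ht₀]
      have hrearr : ENNReal.ofReal (z - c) * (ENNReal.ofReal α
            * ∫⁻ x, ENNReal.ofReal (x - t₀) ∂ν)
          = ENNReal.ofReal α * ∫⁻ x, ENNReal.ofReal (z - c) * ENNReal.ofReal (x - t₀) ∂ν := by
        have hm : Measurable fun x : ℝ => ENNReal.ofReal (x - t₀) := by fun_prop
        rw [lintegral_const_mul _ hm]
        ring
      rw [hrearr, ← mul_add, ← lintegral_add_left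
        (((measurable_const_mul z).min ((measurable_const_mul c).sub_const y)).ennreal_ofReal)]
      have hptwise : ∀ᵐ x ∂ν,
          ENNReal.ofReal (min (z * x) (c * x - y))
            + ENNReal.ofReal (z - c) * ENNReal.ofReal (x - t₀)
          = ENNReal.ofReal (z * x) := by
        filter_upwards [hpos] with x hx
        rcases le_total x t₀ with h | h
        · rw [ENNReal.ofReal_of_nonpos (by linarith : x - t₀ ≤ 0), mul_zero, add_zero]
          congr 1
          have : z * x ≤ c * x - y := by nlinarith
          exact min_eq_left this
        · have hmin : min (z * x) (c * x - y) = c * x - y := by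
            apply min_eq_right; nlinarith
          rw [hmin, ← ENNReal.ofReal_mul (by linarith : (0:ℝ) ≤ z - c),
            ← ENNReal.ofReal_add (by nlinarith : (0:ℝ) ≤ c * x - y)
              (by nlinarith : (0:ℝ) ≤ (z - c) * (x - t₀))]
          congr 1
          nlinarith
      rw [lintegral_congr_ae hptwise]
      have : ∫⁻ x, ENNReal.ofReal (z * x) ∂ν
          = ENNReal.ofReal z * ∫⁻ x, ENNReal.ofReal x ∂ν := by
        simp_rw [ENNReal.ofReal_mul hz.le]
        exact lintegral_const_mul _ measurable_id.ennreal_ofReal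
      rw [this, show ENNReal.ofReal α * (ENNReal.ofReal z * ∫⁻ x, ENNReal.ofReal x ∂ν)
          = ENNReal.ofReal z * (ENNReal.ofReal α * ∫⁻ x, ENNReal.ofReal x ∂ν) by ring,
        hνtot, mul_one]
    -- pass to toReal
    have hτfin : τ B ≠ ⊤ := measure_ne_top τ B
    have hEfin' : excessLife α ν (Ici t₀) ≠ ⊤ := hEfin t₀ ht₀
    have := congrArg ENNReal.toReal hkey
    rw [ENNReal.toReal_add hτfin (ENNReal.mul_ne_top ENNReal.ofReal_ne_top hEfin'),
      ENNReal.toReal_mul, ENNReal.toReal_ofReal (by linarith : (0:ℝ) ≤ z - c),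
      ENNReal.toReal_ofReal hz.le] at this
    linarith
  · -- case 0 < y
    intro hy
    have hyc : 0 ≤ y / c := div_nonneg hy.le hc.le
    have hmin : ∀ᵐ x ∂ν, ENNReal.ofReal (min (z * x) (c * x - y))
        = ENNReal.ofReal (c * x - y) := by
      filter_upwards [hpos] with x hx
      congr 1
      apply min_eq_right
      nlinarith
    have hτB' : τ B = ENNReal.ofReal c * excessLife α ν (Ici (y / c)) := by
      rw [hτB, lintegral_congr_ae hmin, excess_apply α ν hyc]
      have : ENNReal.ofReal c * (ENNReal.ofReal α * ∫⁻ x, ENNReal.ofReal (x - y / c) ∂ν)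
          = ENNReal.ofReal α * ∫⁻ x, ENNReal.ofReal c * ENNReal.ofReal (x - y / c) ∂ν := by
        have hm : Measurable fun x : ℝ => ENNReal.ofReal (x - y / c) := by fun_prop
        rw [lintegral_const_mul _ hm]
        ring
      rw [this]
      congr 1
      apply lintegral_congr fun x => ?_
      rw [← ENNReal.ofReal_mul hc.le]
      congr 1
      field_simp
    rw [hτB', ENNReal.toReal_mul, ENNReal.toReal_ofReal hc.le]
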